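/- Let A be a normal S-ring over a finite abelian group G that is a nontrivial U/L-generalized wreath product for an A-section U/L. Then L and G/U are elementary abelian 2-groups. -/

import Mathlib

open scoped Pointwise

/-- An S-ring (Schur ring) over a finite group `G`, presented by its
partition into basic sets: a partition of `G` containing `{1}`, closed under
inversion, and such that the span of the indicator elements is closed under
multiplication (expressed via constancy of structure constants). -/
structure SRing (G : Type*) [Group G] where
  parts : Set (Set G)
  nonempty_mem : ∀ X ∈ parts, X.Nonempty
  one_mem : ({(1 : G)} : Set G) ∈ parts
  exists_mem : ∀ g : G, ∃ X ∈ parts, g ∈ X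
  eq_of_mem : ∀ X ∈ parts, ∀ Y ∈ parts, ∀ g : G, g ∈ X → g ∈ Y → X = Y
  inv_mem : ∀ X ∈ parts, X⁻¹ ∈ parts
  structConst : ∀ X ∈ parts, ∀ Y ∈ parts, ∀ Z ∈ parts, ∀ z₁ ∈ Z, ∀ z₂ ∈ Z,
    {q : G × G | q.1 ∈ X ∧ q.2 ∈ Y ∧ q.1 * q.2 = z₁}.ncard =
    {q : G × G | q.1 ∈ X ∧ q.2 ∈ Y ∧ q.1 * q.2 = z₂}.ncard

namespace SRing

variable {G : Type*} [Group G]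

/-- The thin radical of an S-ring: the set of group elements whose
singleton is a basic set. -/
def thin (A : SRing G) : Set G := {x : G | ({x} : Set G) ∈ A.parts}

/-- A subgroup `H` is an `A`-subgroup if it is a union of basic sets. -/
def IsASubgroup (A : SRing G) (H : Subgroup G) : Prop :=
  ∀ X ∈ A.parts, ∀ g ∈ X, g ∈ H → X ⊆ (H : Set G)

/-- `A = ZG`, i.e. every basic set is a singleton. -/
def IsFull (A : SRing G) : Prop := ∀ X ∈ A.parts, ∃ g : G, X = {g}

/-- A permutation is an automorphism of the S-ring `A` if it preserves the
partition of `G × G` induced by the basic sets. -/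
def IsAut (A : SRing G) (f : Equiv.Perm G) : Prop :=
  ∀ X ∈ A.parts, ∀ x y : G, y * x⁻¹ ∈ X ↔ (f y) * (f x)⁻¹ ∈ X

end SRing

/-- The radical of a subset `X` of a group: the subgroup of elements `g`
with `g • X = X` (left translations stabilizing `X`). -/
def setRad {G : Type*} [Group G] (X : Set G) : Subgroup G where
  carrier := {g : G | g • X = X}
  one_mem' := one_smul G X
  mul_mem' := by
    intro a b ha hb
    simp only [Set.mem_setOf_eq] at *
    rw [mul_smul, hb, ha]
  inv_mem' := by
    intro a ha
    simp only [Set.mem_setOf_eq] at *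
    calc a⁻¹ • X = a⁻¹ • (a • X) := by rw [ha]
    _ = X := inv_smul_smul a X

/-- A permutation of `G` belongs to the holomorph `Hol(G)` if it is the
composition of an automorphism of `G` with a right translation. -/
def IsHolPerm {G : Type*} [Group G] (f : Equiv.Perm G) : Prop :=
  ∃ σ : MulAut G, ∃ a : G, ∀ g : G, f g = σ g * a

namespace SRing

variable {G : Type*} [Group G]

/-- An S-ring is normal if all of its automorphisms lie in the holomorph. -/
def IsNormal (A : SRing G) : Prop := ∀ f : Equiv.Perm G, A.IsAut f → IsHolPerm f

/-- `f ∈ Iso(A)`: `f` is a combinatorial isomorphism from `A` onto some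
S-ring over `G`. -/
def IsIsoPerm (A : SRing G) (f : Equiv.Perm G) : Prop :=
  ∃ B : SRing G, ∀ X ∈ A.parts, ∃ X' ∈ B.parts,
    ∀ x y : G, y * x⁻¹ ∈ X ↔ (f y) * (f x)⁻¹ ∈ X'

/-- An S-ring is CI if `Iso(A) = Aut(A)·Aut(G)`. -/
def IsCI (A : SRing G) : Prop :=
  ∀ f : Equiv.Perm G, A.IsIsoPerm f →
    ∃ a : Equiv.Perm G, A.IsAut a ∧ ∃ σ : MulAut G, ∀ x : G, f x = a (σ x)

end SRing

/-- If a normal S-ring `A` over a finite abelian group `G` is a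
nontrivial `U/L`-generalized wreath product, then `L` and `G/U` are
elementary abelian `2`-groups. -/
theorem wrnorm {G : Type*} [CommGroup G] [Fintype G]
    (A : SRing G) (hnorm : A.IsNormal)
    (U L : Subgroup G) (hU : A.IsASubgroup U) (hL : A.IsASubgroup L)
    (hLU : L ≤ U) (hLbot : L ≠ ⊥) (hUtop : U ≠ ⊤)
    (hwr : ∀ X ∈ A.parts, ¬ X ⊆ (U : Set G) → ∀ l ∈ L, l • X = X) :
    (∀ l ∈ L, l ^ 2 = 1) ∧ (∀ g : G, g ∉ U → g ^ 2 ∈ U) := by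
  classical
  -- membership is invariant under right multiplication by L, outside U
  have key : ∀ X ∈ A.parts, ∀ z : G, z ∉ U → ∀ l ∈ L, (z ∈ X ↔ z * l ∈ X) := by
    intro X hX z hz l hl
    by_cases hXU : X ⊆ (U : Set G)
    · constructor
      · intro h; exact absurd (hXU h) hz
      · intro h
        have : z * l ∈ U := hXU h
        have : z ∈ U := by
          have := mul_mem this (inv_mem (hLU hl))
          simpa [mul_assoc] using this
        exact absurd this hz
    · have hs := hwr X hX hXU l hl
      constructor
      · intro h
        have : l • z ∈ l • X := Set.smul_mem_smul_set h
        rw [hs] at this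
        simpa [smul_eq_mul, mul_comm] using this
      · intro h
        rw [← hs] at h
        rcases h with ⟨w, hw, hwz⟩
        have : w = z := by
          have : l * w = z * l := hwz
          have := mul_right_cancel (a := w) (b := l) (c := z)
          have hwz : l * w = z * l := hwz
          calc w = l⁻¹ * (l * w) := by group
          _ = l⁻¹ * (z * l) := by rw [hwz]
          _ = z := by rw [mul_comm z l]; group
        rwa [this] at hw
  have memU : ∀ h ∈ L, ∀ g : G, (g * h ∈ U ↔ g ∈ U) := by
    intro h hh g
    constructor
    · intro hg
      have := mul_mem hg (inv_mem (hLU hh))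
      simpa [mul_assoc] using this
    · intro hg; exact mul_mem hg (hLU hh)
  -- for each h ∈ L, construct the automorphism σ of G
  have main : ∀ h ∈ L, ∃ σ : MulAut G, (∀ u ∈ U, σ u = u) ∧ (∀ g : G, g ∉ U → σ g = g * h) := by
    intro h hh
    set f : Equiv.Perm G :=
      { toFun := fun g => if g ∈ U then g else g * h
        invFun := fun g => if g ∈ U then g else g * h⁻¹
        left_inv := by
          intro g
          by_cases hg : g ∈ U
          · simp [hg]
          · have : g * h ∉ U := fun hc => hg ((memU h hh g).mp hc)
            simp [hg, this, mul_assoc]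
        right_inv := by
          intro g
          by_cases hg : g ∈ U
          · simp [hg]
          · have : g * h⁻¹ ∉ U := fun hc => hg (by
              have := mul_mem hc (hLU hh)
              simpa [mul_assoc] using this)
            simp [hg, this, mul_assoc] } with hf
    have haut : A.IsAut f := by
      intro X hX x y
      by_cases hx : x ∈ U <;> by_cases hy : y ∈ U
      · simp [hf, hx, hy]
      · have hne : y * x⁻¹ ∉ U := fun hc => hy (by
          have := mul_mem hc hx; simpa [mul_assoc] using this)
        have heq : (y * h) * x⁻¹ = (y * x⁻¹) * h := by
          simp [mul_comm, mul_assoc, mul_left_comm]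
        simp only [hf, Equiv.coe_fn_mk, if_pos hx, if_neg hy]
        rw [heq]
        exact key X hX _ hne h hh
      · have hne : y * x⁻¹ ∉ U := fun hc => hx (by
          have := mul_mem (inv_mem hc) hy
          simpa [mul_inv_rev, mul_comm, mul_assoc] using (inv_mem this))
        have heq : y * (x * h)⁻¹ = (y * x⁻¹) * h⁻¹ := by
          simp [mul_inv_rev, mul_comm, mul_assoc, mul_left_comm]
        simp only [hf, Equiv.coe_fn_mk, if_pos hy, if_neg hx]
        rw [heq]
        exact key X hX _ hne h⁻¹ (inv_mem hh)
      · have heq : (y * h) * (x * h)⁻¹ = y * x⁻¹ := by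
          calc (y * h) * (x * h)⁻¹ = (y * h) * (h⁻¹ * x⁻¹) := by rw [mul_inv_rev]
          _ = y * (h * (h⁻¹ * x⁻¹)) := by rw [mul_assoc]
          _ = y * x⁻¹ := by rw [mul_inv_cancel_left]
        simp only [hf, Equiv.coe_fn_mk, if_neg hx, if_neg hy, heq]
    obtain ⟨σ, a, hfa⟩ := hnorm f haut
    have ha : a = 1 := by
      have h1 := hfa 1
      simp [hf, U.one_mem] at h1
      exact h1.symm
    refine ⟨σ, ?_, ?_⟩
    · intro u hu
      have := hfa u
      simp [hf, hu, ha] at this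
      exact this.symm
    · intro g hg
      have := hfa g
      simp [hf, hg, ha] at this
      exact this.symm
  obtain ⟨h0, hh0L, hh0ne⟩ : ∃ h0 ∈ L, h0 ≠ 1 := by
    by_contra hc
    push_neg at hc
    exact hLbot (by
      ext x
      simp only [Subgroup.mem_bot]
      exact ⟨fun hx => hc x hx, fun hx => hx ▸ L.one_mem⟩)
  obtain ⟨σ0, hσ0U, hσ0out⟩ := main h0 hh0L
  have part2 : ∀ g : G, g ∉ U → g ^ 2 ∈ U := by
    intro g hg
    by_contra hgg
    have h1 : σ0 (g * g) = (g * g) * h0 := by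
      have : g * g ∉ U := by rwa [← pow_two]
      exact hσ0out _ this
    have h2 : σ0 (g * g) = (g * h0) * (g * h0) := by
      rw [map_mul, hσ0out g hg]
    rw [h1] at h2
    have h3 : (g * g) * h0 = (g * g) * (h0 * h0) := by
      rw [h2, mul_mul_mul_comm]
    have h4 : h0 = h0 * h0 := mul_left_cancel h3
    exact hh0ne ((mul_left_cancel (a := h0) (b := (1 : G)) (c := h0)
      (by rw [mul_one]; exact h4)).symm)
  refine ⟨?_, part2⟩
  intro l hl
  obtain ⟨σ, hσU, hσout⟩ := main l hl
  obtain ⟨g, hg⟩ : ∃ g : G, g ∉ U := by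
    by_contra hc
    push_neg at hc
    exact hUtop (by ext x; simpa using hc x)
  have hg2 : g ^ 2 ∈ U := part2 g hg
  have h1 : σ (g * g) = g * g := hσU _ (by rwa [← pow_two])
  have h2 : σ (g * g) = (g * l) * (g * l) := by rw [map_mul, hσout g hg]
  rw [h1] at h2
  have h3 : (g * g) * 1 = (g * g) * (l * l) := by
    rw [mul_one]
    calc g * g = (g * l) * (g * l) := h2
    _ = (g * g) * (l * l) := mul_mul_mul_comm g l g l
  have h4 : (1 : G) = l * l := mul_left_cancel h3
  rw [pow_two]
  exact h4.symm
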